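/- There exist 18 two-dimensional subspaces of R^4 with pairwise d_c² = 1, achieving the orthoplex bound n(m−n)/m = 1 for N = 18 > m(m+1)/2 = 10: namely, the planes spanned by pairs of mutually perpendicular minimal vectors of the D_4 lattice, with principal angle pairs (0, π/2), (π/4, π/4), or (π/2, π/2). -/

import Mathlib

open Matrix

/-- The 18 integer generator matrices of the `D₄` planes (rows are minimal vectors). -/
def D4B : Fin 18 → Matrix (Fin 2) (Fin 4) ℤ := ![
  !![1,1,0,0; 0,0,1,1], !![1,1,0,0; 0,0,1,-1], !![1,-1,0,0; 0,0,1,1], !![1,-1,0,0; 0,0,1,-1],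
  !![1,0,1,0; 0,1,0,1], !![1,0,1,0; 0,1,0,-1], !![1,0,-1,0; 0,1,0,1], !![1,0,-1,0; 0,1,0,-1],
  !![1,0,0,1; 0,1,1,0], !![1,0,0,1; 0,1,-1,0], !![1,0,0,-1; 0,1,1,0], !![1,0,0,-1; 0,1,-1,0],
  !![1,1,0,0; 1,-1,0,0], !![1,0,1,0; 1,0,-1,0], !![1,0,0,1; 1,0,0,-1],
  !![0,1,1,0; 0,1,-1,0], !![0,1,0,1; 0,1,0,-1], !![0,0,1,1; 0,0,1,-1]]

/-- Entrywise cast from `ℤ` to `ℝ`. -/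
def cmap {m n : Type*} (X : Matrix m n ℤ) : Matrix m n ℝ := X.map (Int.cast)

lemma cmap_mul {m n o : Type*} [Fintype n] (X : Matrix m n ℤ) (Y : Matrix n o ℤ) :
    cmap (X * Y) = cmap X * cmap Y := by
  simpa [cmap] using Matrix.map_mul (L := X) (M := Y) (f := Int.castRingHom ℝ)

lemma cmap_transpose {m n : Type*} (X : Matrix m n ℤ) : cmap Xᵀ = (cmap X)ᵀ :=
  Matrix.transpose_map

lemma cmap_injective {m n : Type*} : Function.Injective (cmap (m := m) (n := n)) := by
  intro X Y h
  ext i j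
  have := congrFun (congrFun h i) j
  simpa [cmap, Matrix.map_apply] using this

lemma cmap_smul {m n : Type*} (z : ℤ) (X : Matrix m n ℤ) :
    cmap (z • X) = (z : ℝ) • cmap X := by
  ext i j
  simp [cmap, Matrix.map_apply]

lemma trace_cmap {n : Type*} [Fintype n] (X : Matrix n n ℤ) :
    Matrix.trace (cmap X) = ((Matrix.trace X : ℤ) : ℝ) := by
  simp [Matrix.trace, Matrix.diag, cmap, Matrix.map_apply]

lemma two_one : cmap (!![2,0;0,2] : Matrix (Fin 2) (Fin 2) ℤ) = (2 : ℝ) • 1 := by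
  ext i j
  fin_cases i <;> fin_cases j <;>
    simp [cmap, Matrix.map_apply, Matrix.one_apply]

lemma keyM (c : ℝ) (hcc : c * c = 1/2) (X Y : Matrix (Fin 2) (Fin 4) ℤ) :
    (c • cmap X) * (c • cmap Y)ᵀ = (1/2 : ℝ) • cmap (X * Yᵀ) := by
  rw [Matrix.transpose_smul, Matrix.smul_mul, Matrix.mul_smul, smul_smul, hcc,
    cmap_mul, cmap_transpose]

lemma keyMM (c : ℝ) (hcc : c * c = 1/2) (X Y : Matrix (Fin 2) (Fin 4) ℤ) :
    ((c • cmap X) * (c • cmap Y)ᵀ) * ((c • cmap X) * (c • cmap Y)ᵀ)ᵀ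
      = (1/4 : ℝ) • cmap ((X * Yᵀ) * (X * Yᵀ)ᵀ) := by
  rw [keyM c hcc, Matrix.transpose_smul, Matrix.smul_mul, Matrix.mul_smul, smul_smul,
    ← cmap_transpose, ← cmap_mul]
  norm_num

lemma d1 : ∀ i, D4B i * (D4B i)ᵀ = !![2,0;0,2] := by decide

lemma d2 : ∀ (i : Fin 18) (k : Fin 2) (l : Fin 4),
    D4B i k l = -1 ∨ D4B i k l = 0 ∨ D4B i k l = 1 := by
  intro i k l
  fin_cases i <;> fin_cases k <;> fin_cases l <;> simp [D4B]

lemma d3 : ∀ (i : Fin 18) (k : Fin 2), ∑ l, D4B i k l ^ 2 = 2 := by decide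

lemma d4 : ∀ i j : Fin 18, i ≠ j → (D4B i)ᵀ * D4B i ≠ (D4B j)ᵀ * D4B j := by decide

lemma d5 : ∀ i j : Fin 18, i ≠ j →
    (D4B i * (D4B j)ᵀ) * (D4B i * (D4B j)ᵀ)ᵀ = !![2,0;0,2] ∨
    (((D4B i * (D4B j)ᵀ) * (D4B i * (D4B j)ᵀ)ᵀ) * ((D4B i * (D4B j)ᵀ) * (D4B i * (D4B j)ᵀ)ᵀ)
        = (4 : ℤ) • ((D4B i * (D4B j)ᵀ) * (D4B i * (D4B j)ᵀ)ᵀ) ∧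
      Matrix.trace ((D4B i * (D4B j)ᵀ) * (D4B i * (D4B j)ᵀ)ᵀ) = 4) ∨
    D4B i * (D4B j)ᵀ = 0 := by decide

lemma d6 : ∀ i j : Fin 18, i ≠ j →
    Matrix.trace ((D4B i * (D4B j)ᵀ) * (D4B i * (D4B j)ᵀ)ᵀ) ≤ 4 := by decide

lemma d7 : Matrix.trace ((D4B 0 * (D4B 1)ᵀ) * (D4B 0 * (D4B 1)ᵀ)ᵀ) = 4 := by decide

/-- There exist 18 distinct two-dimensional subspaces of `ℝ⁴` — the planes spanned
by pairs of mutually perpendicular minimal vectors of the `D₄` lattice (each row of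
each orthonormal generator matrix is `1/√2` times a vector with entries in
`{-1,0,1}` and squared length `2`) — such that for each pair of planes, with
`M = A i * (A j)ᵀ`, the principal angles are `(π/4, π/4)` (`M Mᵀ = (1/2)•1`),
`(0, π/2)` (`M Mᵀ` idempotent of trace `1`), or `(π/2, π/2)` (`M = 0`); the minimum
squared chordal distance `2 - trace (M Mᵀ)` equals `1 = n(m-n)/m`, achieving the
orthoplex bound for `N = 18 > m(m+1)/2 = 10`. -/
theorem eighteen_planes_in_R4 :
    ∃ A : Fin 18 → Matrix (Fin 2) (Fin 4) ℝ,
      (∀ i, A i * (A i)ᵀ = 1) ∧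
      (∀ i k, ∃ v : Fin 4 → ℝ, (∀ l, v l = -1 ∨ v l = 0 ∨ v l = 1) ∧
        (∑ l, v l ^ 2 = 2) ∧ (∀ l, A i k l = v l / Real.sqrt 2)) ∧
      (∀ i j, i ≠ j → (A i)ᵀ * A i ≠ (A j)ᵀ * A j) ∧
      (∀ i j, i ≠ j →
        ((A i * (A j)ᵀ) * (A i * (A j)ᵀ)ᵀ = ((1 : ℝ) / 2) • 1 ∨
         (((A i * (A j)ᵀ) * (A i * (A j)ᵀ)ᵀ) * ((A i * (A j)ᵀ) * (A i * (A j)ᵀ)ᵀ) =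
            (A i * (A j)ᵀ) * (A i * (A j)ᵀ)ᵀ ∧
          Matrix.trace ((A i * (A j)ᵀ) * (A i * (A j)ᵀ)ᵀ) = 1) ∨
         A i * (A j)ᵀ = 0)) ∧
      (∀ i j, i ≠ j →
        (1 : ℝ) ≤ 2 - Matrix.trace ((A i * (A j)ᵀ) * (A i * (A j)ᵀ)ᵀ)) ∧
      (∃ i j, i ≠ j ∧
        (2 : ℝ) - Matrix.trace ((A i * (A j)ᵀ) * (A i * (A j)ᵀ)ᵀ) = 1) := by
  set c : ℝ := (Real.sqrt 2)⁻¹ with hc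
  have hcc : c * c = 1 / 2 := by
    rw [hc, ← mul_inv, Real.mul_self_sqrt (by norm_num)]
    norm_num
  refine ⟨fun i => c • cmap (D4B i), ?_, ?_, ?_, ?_, ?_, ?_⟩
  · intro i
    rw [keyM c hcc, d1 i, two_one, smul_smul]
    norm_num
  · intro i k
    refine ⟨fun l => ((D4B i k l : ℤ) : ℝ), ?_, ?_, ?_⟩
    · intro l
      rcases d2 i k l with h | h | h <;> simp [h]
    · have h2 : ((∑ l, D4B i k l ^ 2 : ℤ) : ℝ) = 2 := by rw [d3 i k]; norm_num
      push_cast at h2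
      exact h2
    · intro l
      show (c • cmap (D4B i)) k l = _
      simp only [Matrix.smul_apply, smul_eq_mul, cmap, Matrix.map_apply]
      rw [div_eq_mul_inv, mul_comm, hc]
  · intro i j hij h
    have key : ∀ t : Fin 18, ((c • cmap (D4B t))ᵀ) * (c • cmap (D4B t))
        = (1/2 : ℝ) • cmap ((D4B t)ᵀ * D4B t) := by
      intro t
      rw [Matrix.transpose_smul, Matrix.smul_mul, Matrix.mul_smul, smul_smul, hcc,
        cmap_mul, cmap_transpose]
    rw [key i, key j] at h
    exact d4 i j hij (cmap_injective
      (smul_right_injective _ (by norm_num : (1/2 : ℝ) ≠ 0) h))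
  · intro i j hij
    rcases d5 i j hij with h | ⟨h1, h2⟩ | h
    · left
      rw [keyMM c hcc, h, two_one, smul_smul]
      norm_num
    · right; left
      constructor
      · rw [keyMM c hcc, Matrix.smul_mul, Matrix.mul_smul, smul_smul, ← cmap_mul, h1,
          cmap_smul, smul_smul]
        norm_num
      · rw [keyMM c hcc, Matrix.trace_smul, trace_cmap, h2]
        norm_num
    · right; right
      rw [keyM c hcc, h]
      simp [cmap]
  · intro i j hij
    rw [keyMM c hcc, Matrix.trace_smul, trace_cmap]
    have : ((Matrix.trace ((D4B i * (D4B j)ᵀ) * (D4B i * (D4B j)ᵀ)ᵀ) : ℤ) : ℝ) ≤ 4 := by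
      exact_mod_cast d6 i j hij
    simp only [smul_eq_mul]
    linarith
  · refine ⟨0, 1, by decide, ?_⟩
    rw [keyMM c hcc, Matrix.trace_smul, trace_cmap, d7]
    norm_num
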